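/- Fix real t > 0 and y > 0, and let a > 2. Suppose F : (1,∞) → ℝ is given by F(z) = e^{−tρ(z)} / (t^{1/2} z (z²−1)^{1/4}) with ρ(z) = √(z²−1) − arccos(1/z). Then ∫_a^∞ F(z) dz ≪ e^{−tρ(a)} / (a t)^{3/2}, with an absolute implied constant. -/

import Mathlib

open Real Set MeasureTheory

open Filter Topology

/-- `ρ(z) = √(z²−1) − arccos(1/z)`. -/
noncomputable def rhoFun (z : ℝ) : ℝ := Real.sqrt (z ^ 2 - 1) - Real.arccos (1 / z)

lemma hasDerivAt_rhoFun {z : ℝ} (hz : 1 < z) :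
    HasDerivAt rhoFun (Real.sqrt (z ^ 2 - 1) / z) z := by
  have hz0 : (0:ℝ) < z := lt_trans one_pos hz
  have hx : (0:ℝ) < z ^ 2 - 1 := by nlinarith
  have hs : (0:ℝ) < Real.sqrt (z ^ 2 - 1) := Real.sqrt_pos.mpr hx
  have h1 : HasDerivAt (fun z : ℝ => z ^ 2 - 1) (2 * z) z := by
    simpa using (hasDerivAt_pow 2 z).sub_const 1
  have hsq : HasDerivAt (fun z : ℝ => Real.sqrt (z ^ 2 - 1))
      (1 / (2 * Real.sqrt (z ^ 2 - 1)) * (2 * z)) z :=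
    (Real.hasDerivAt_sqrt (ne_of_gt hx)).comp z h1
  have hinv : HasDerivAt (fun z : ℝ => 1 / z) (-(1 / z ^ 2)) z := by
    simpa using (hasDerivAt_inv (ne_of_gt hz0))
  have hne1 : (1:ℝ) / z ≠ 1 := by
    have : (1:ℝ) / z < 1 := by rw [div_lt_one hz0]; exact hz
    exact ne_of_lt this
  have hne2 : (1:ℝ) / z ≠ -1 := by
    have : (0:ℝ) < 1 / z := by positivity
    linarith
  have harc : HasDerivAt (fun z : ℝ => Real.arccos (1 / z))
      (-(1 / Real.sqrt (1 - (1 / z) ^ 2)) * (-(1 / z ^ 2))) z :=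
    (Real.hasDerivAt_arccos hne2 hne1).comp z hinv
  have key := hsq.sub harc
  convert key using 1
  · rfl
  · rfl
  · rfl
  have h1z : 1 - (1 / z) ^ 2 = (z ^ 2 - 1) / z ^ 2 := by field_simp
  have hsz : Real.sqrt (1 - (1 / z) ^ 2) = Real.sqrt (z ^ 2 - 1) / z := by
    rw [h1z, Real.sqrt_div hx.le, Real.sqrt_sq hz0.le]
  rw [hsz]
  have hss : Real.sqrt (z^2-1) * Real.sqrt (z^2-1) = z^2-1 := Real.mul_self_sqrt hx.le
  field_simp
  linear_combination hss

theorem bessel_tail_integral_bound :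
    ∃ C : ℝ, 0 < C ∧ ∀ t : ℝ, 0 < t → ∀ a : ℝ, 2 < a →
      ∫ z in Ioi a,
          Real.exp (-t * rhoFun z) / (t ^ ((1 : ℝ) / 2) * z * (z ^ 2 - 1) ^ ((1 : ℝ) / 4))
        ≤ C * Real.exp (-t * rhoFun a) / (a * t) ^ ((3 : ℝ) / 2) := by
  refine ⟨2, two_pos, ?_⟩
  intro t ht a ha
  have ha1 : (1:ℝ) < a := by linarith
  have ha0 : (0:ℝ) < a := by linarith
  have hta : (0:ℝ) < t ^ ((1:ℝ)/2) := Real.rpow_pos_of_pos ht _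
  have ha32 : (0:ℝ) < a ^ ((3:ℝ)/2) := Real.rpow_pos_of_pos ha0 _
  set F : ℝ → ℝ := fun z =>
    Real.exp (-t * rhoFun z) / (t ^ ((1 : ℝ) / 2) * z * (z ^ 2 - 1) ^ ((1 : ℝ) / 4)) with hF
  set g' : ℝ → ℝ := fun z => Real.exp (-t * rhoFun z) * (Real.sqrt (z ^ 2 - 1) / z) with hg'
  set g : ℝ → ℝ := fun z => -Real.exp (-t * rhoFun z) / t with hg
  set K : ℝ := 2 / (a ^ ((3:ℝ)/2) * t ^ ((1:ℝ)/2)) with hK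
  have hKpos : 0 < K := by positivity
  -- derivative
  have hderiv : ∀ z ∈ Ici a, HasDerivAt g (g' z) z := by
    intro z hz
    have hz1 : 1 < z := lt_of_lt_of_le ha1 hz
    have h := (((hasDerivAt_rhoFun hz1).const_mul (-t)).exp.div_const t).neg
    convert h.congr_deriv ?_ using 1
    · rfl
    · rfl
    · funext x; simp [hg, neg_div]
    · field_simp [hg']
      simp only [hg']
      rw [mul_comm z, mul_assoc, div_mul_cancel₀ _ (by linarith : z ≠ 0)]
      ring_nf
  -- tendsto
  have hrho : Tendsto rhoFun atTop atTop := by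
    have hlow : Tendsto (fun z : ℝ => z - (1 + Real.pi)) atTop atTop := by
      simpa [sub_eq_add_neg] using
        tendsto_atTop_add_const_right atTop (-(1 + Real.pi)) (tendsto_id (α := ℝ))
    apply tendsto_atTop_mono' atTop ?_ hlow
    filter_upwards [eventually_ge_atTop (1:ℝ)] with z hz
    have h1 : z - 1 ≤ Real.sqrt (z ^ 2 - 1) := by
      have he : ((z - 1:ℝ)) = Real.sqrt ((z-1)^2) := (Real.sqrt_sq (by linarith)).symm
      rw [he]
      apply Real.sqrt_le_sqrt
      nlinarith
    have h2 : Real.arccos (1 / z) ≤ Real.pi := Real.arccos_le_pi _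
    simp only [rhoFun]
    linarith
  have htend : Tendsto g atTop (𝓝 0) := by
    have h1 : Tendsto (fun z => -t * rhoFun z) atTop atBot := by
      apply Tendsto.const_mul_atTop_of_neg (by linarith : -t < 0) hrho
    have h2 : Tendsto (fun z => Real.exp (-t * rhoFun z)) atTop (𝓝 0) :=
      Real.tendsto_exp_atBot.comp h1
    rw [hg]
    have h3 : Tendsto (fun z => -Real.exp (-t * rhoFun z) / t) atTop (𝓝 (-0 / t)) :=
      (h2.neg).div_const t
    simpa using h3
  have hnonneg : ∀ z ∈ Ioi a, 0 ≤ g' z := by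
    intro z hz
    have hz0 : (0:ℝ) < z := lt_trans ha0 hz
    have : (0:ℝ) ≤ Real.sqrt (z ^ 2 - 1) / z := div_nonneg (Real.sqrt_nonneg _) hz0.le
    exact mul_nonneg (Real.exp_pos _).le this
  have hint : IntegrableOn g' (Ioi a) :=
    integrableOn_Ioi_deriv_of_nonneg' hderiv hnonneg htend
  have heq : ∫ z in Ioi a, g' z = Real.exp (-t * rhoFun a) / t := by
    rw [integral_Ioi_of_hasDerivAt_of_nonneg' hderiv hnonneg htend]
    simp [hg, neg_div]
  -- pointwise bound
  have hbound : ∀ z ∈ Ioi a, F z ≤ K * g' z := by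
    intro z hz
    have hza : a < z := hz
    have hz0 : (0:ℝ) < z := lt_trans ha0 hz
    have hx : (0:ℝ) < z ^ 2 - 1 := by nlinarith
    set x : ℝ := z ^ 2 - 1 with hxdef
    have hkey : a ^ ((3:ℝ)/2) ≤ 2 * x ^ ((3:ℝ)/4) := by
      have h4 : (a ^ ((3:ℝ)/2)) ^ (4:ℕ) = a ^ (6:ℕ) := by
        rw [← Real.rpow_natCast (a ^ ((3:ℝ)/2)) 4, ← Real.rpow_mul ha0.le,
          ← Real.rpow_natCast a 6]
        norm_num
      have h5 : (2 * x ^ ((3:ℝ)/4)) ^ (4:ℕ) = 16 * x ^ (3:ℕ) := by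
        rw [mul_pow, ← Real.rpow_natCast (x ^ ((3:ℝ)/4)) 4, ← Real.rpow_mul hx.le,
          ← Real.rpow_natCast x 3]
        norm_num
      have hzz : (0:ℝ) ≤ (z ^ 2 - 1) ^ (3:ℕ) := by positivity
      have h6 : (a ^ ((3:ℝ)/2)) ^ (4:ℕ) ≤ (2 * x ^ ((3:ℝ)/4)) ^ (4:ℕ) := by
        rw [h4, h5, hxdef]
        calc a ^ (6:ℕ) = (a ^ 2) ^ (3:ℕ) := by ring
          _ ≤ (2 * (z ^ 2 - 1)) ^ (3:ℕ) := pow_le_pow_left₀ (sq_nonneg a) (by nlinarith) 3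
          _ ≤ 16 * (z ^ 2 - 1) ^ (3:ℕ) := by nlinarith [hzz]
      have hb : (0:ℝ) ≤ 2 * x ^ ((3:ℝ)/4) := by positivity
      exact le_of_pow_le_pow_left₀ (by norm_num) hb h6
    have hxx : x ^ ((1:ℝ)/2) * x ^ ((1:ℝ)/4) = x ^ ((3:ℝ)/4) := by
      rw [← Real.rpow_add hx]; norm_num
    have hden : (0:ℝ) < t ^ ((1:ℝ)/2) * z * x ^ ((1:ℝ)/4) := by positivity
    have hsx : Real.sqrt x = x ^ ((1:ℝ)/2) := Real.sqrt_eq_rpow x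
    rw [hF]
    simp only
    rw [div_le_iff₀ hden, hg']
    simp only
    rw [hsx]
    have hrw : K * (Real.exp (-t * rhoFun z) * (x ^ ((1:ℝ)/2) / z)) *
        (t ^ ((1:ℝ)/2) * z * x ^ ((1:ℝ)/4)) =
        Real.exp (-t * rhoFun z) * (2 * x ^ ((3:ℝ)/4)) / a ^ ((3:ℝ)/2) := by
      rw [← hxx, hK]; field_simp
    rw [hrw, le_div_iff₀ ha32]
    have := mul_le_mul_of_nonneg_left hkey (Real.exp_pos (-t * rhoFun z)).le
    linarith
  have hFnonneg : ∀ z ∈ Ioi a, 0 ≤ F z := by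
    intro z hz
    have hz0 : (0:ℝ) < z := lt_trans ha0 hz
    have hx : (0:ℝ) < z ^ 2 - 1 := by nlinarith [lt_trans ha1 (show a < z from hz)]
    have : (0:ℝ) < t ^ ((1:ℝ)/2) * z * (z ^ 2 - 1) ^ ((1:ℝ)/4) := by positivity
    exact le_of_lt (div_pos (Real.exp_pos _) this)
  have hKint : IntegrableOn (fun z => K * g' z) (Ioi a) := hint.const_mul K
  have hFmeas : AEStronglyMeasurable F (volume.restrict (Ioi a)) := by
    apply Measurable.aestronglyMeasurable
    rw [hF]
    unfold rhoFun
    have minv : Measurable fun z : ℝ => 1 / z := measurable_const.div measurable_id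
    have marc : Measurable fun z : ℝ => Real.arccos (1 / z) :=
      Real.continuous_arccos.measurable.comp minv
    have mpoly : Measurable fun z : ℝ => z ^ 2 - 1 :=
      (measurable_id.pow_const 2).sub measurable_const
    have msqrt : Measurable fun z : ℝ => Real.sqrt (z ^ 2 - 1) :=
      Real.continuous_sqrt.measurable.comp mpoly
    have mexp : Measurable fun z : ℝ =>
        Real.exp (-t * (Real.sqrt (z ^ 2 - 1) - Real.arccos (1 / z))) :=
      Real.continuous_exp.measurable.comp ((msqrt.sub marc).const_mul (-t))
    have mr : Measurable fun z : ℝ => (z ^ 2 - 1) ^ ((1:ℝ)/4) :=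
      (Real.continuous_rpow_const (by norm_num)).measurable.comp mpoly
    exact mexp.div ((measurable_const.mul measurable_id).mul mr)
  have hFint : IntegrableOn F (Ioi a) := by
    apply Integrable.mono' hKint hFmeas
    filter_upwards [ae_restrict_mem measurableSet_Ioi] with z hz
    rw [Real.norm_eq_abs, abs_of_nonneg (hFnonneg z hz)]
    exact hbound z hz
  have hle : ∫ z in Ioi a, F z ≤ ∫ z in Ioi a, K * g' z :=
    setIntegral_mono_on hFint hKint measurableSet_Ioi hbound
  have hKval : ∫ z in Ioi a, K * g' z = K * (Real.exp (-t * rhoFun a) / t) := by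
    rw [integral_const_mul, heq]
  have hfinal : K * (Real.exp (-t * rhoFun a) / t) =
      2 * Real.exp (-t * rhoFun a) / (a * t) ^ ((3:ℝ)/2) := by
    have h1 : (a * t) ^ ((3:ℝ)/2) = a ^ ((3:ℝ)/2) * (t ^ ((1:ℝ)/2) * t) := by
      rw [Real.mul_rpow ha0.le ht.le]
      congr 1
      rw [show ((3:ℝ)/2) = 1/2 + 1 by norm_num, Real.rpow_add ht, Real.rpow_one]
    rw [h1, hK]
    field_simp
  calc ∫ z in Ioi a, F z ≤ ∫ z in Ioi a, K * g' z := hle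
    _ = K * (Real.exp (-t * rhoFun a) / t) := hKval
    _ = 2 * Real.exp (-t * rhoFun a) / (a * t) ^ ((3:ℝ)/2) := hfinal
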